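/- For a prime power q and any n ≥ 1, S_1(2q^n - 1) = -[n+1]/[1]^{2q^n}, where [m] = t^{q^m} - t. -/
import Mathlib

open Polynomial

lemma aux_prod (F : Type) [Field F] [Fintype F] :
    ∏ θ : F, (X - C θ) = X ^ Fintype.card F - X := by
  classical
  have hroots : (X ^ Fintype.card F - X : F[X]).roots = Finset.univ.val :=
    FiniteField.roots_X_pow_card_sub_X F
  have hm : (X ^ Fintype.card F - X : F[X]).Monic := by
    apply Polynomial.monic_X_pow_sub
    rw [degree_X]
    exact_mod_cast Fintype.one_lt_card (α := F)
  have hcard : Multiset.card (X ^ Fintype.card F - X : F[X]).roots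
      = (X ^ Fintype.card F - X : F[X]).natDegree := by
    rw [hroots, FiniteField.X_pow_card_sub_X_natDegree_eq F Fintype.one_lt_card]
    exact Finset.card_univ
  have h := Polynomial.C_leadingCoeff_mul_prod_multiset_X_sub_C hcard
  rw [hm.leadingCoeff, C_1, one_mul, hroots] at h
  rw [← h]
  rfl

lemma aux_derivative_prod {F : Type} [Field F] {ι : Type} [DecidableEq ι] (s : Finset ι)
    (f : ι → F[X]) :
    derivative (∏ i ∈ s, f i) = ∑ i ∈ s, (∏ j ∈ s.erase i, f j) * derivative (f i) := by
  rw [Finset.prod, Polynomial.derivative_prod, Finset.sum]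
  rfl

/-- `S_1(2q^n - 1) = -[n+1]/[1]^{2q^n}` where `[m] = t^{q^m} - t`. -/
theorem stmt_1 (p s q : ℕ) (hp : p.Prime) (hs : 0 < s) (hq : q = p ^ s)
    {F : Type} [Field F] [Fintype F] (hF : Fintype.card F = q)
    (n : ℕ) (hn : 1 ≤ n) :
    (∑ θ : F, ((RatFunc.X + RatFunc.C θ) ^ (2 * q ^ n - 1))⁻¹) =
      -(RatFunc.X ^ q ^ (n + 1) - RatFunc.X) /
        (RatFunc.X ^ q - RatFunc.X) ^ (2 * q ^ n) := by
  classical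
  haveI : Fact p.Prime := ⟨hp⟩
  have hq1 : 1 < q := by rw [hq]; exact Nat.one_lt_pow hs.ne' hp.one_lt
  -- characteristic facts
  have hq0F : ((q : ℕ) : F) = 0 := by rw [← hF]; exact FiniteField.cast_card_eq_zero F
  haveI hcharF : CharP F p := by
    have h1 : ringChar F ∣ q := ringChar.dvd hq0F
    have h2 : (ringChar F).Prime := CharP.char_is_prime F (ringChar F)
    have h3 : ringChar F = p :=
      (Nat.prime_dvd_prime_iff_eq h2 hp).mp (h2.dvd_of_dvd_pow (hq ▸ h1))
    exact h3 ▸ ringChar.charP F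
  haveI : CharP (RatFunc F) p :=
    charP_of_injective_algebraMap (algebraMap F (RatFunc F)).injective p
  -- reindex the sum
  rw [show (∑ θ : F, ((RatFunc.X + RatFunc.C θ) ^ (2 * q ^ n - 1))⁻¹)
      = ∑ θ : F, ((RatFunc.X - RatFunc.C θ) ^ (2 * q ^ n - 1))⁻¹ from
    Fintype.sum_equiv (Equiv.neg F) _ _ (fun θ => by
      rw [Equiv.neg_apply, map_neg, sub_neg_eq_add])]
  -- polynomial identities
  set P : F[X] := ∏ θ : F, (X - C θ) with hPdef
  have hP : P = X ^ q - X := by rw [hPdef, aux_prod, hF]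
  have hD : derivative P = -1 := by
    rw [hP, derivative_sub, derivative_X_pow, derivative_X, hq0F, C_0, zero_mul, zero_sub]
  set Pe : F → F[X] := fun θ => ∏ η ∈ Finset.univ.erase θ, (X - C η) with hPedef
  have hfac : ∀ θ : F, P = (X - C θ) * Pe θ := fun θ =>
    (Finset.mul_prod_erase Finset.univ _ (Finset.mem_univ θ)).symm
  have hsum : ∑ θ : F, Pe θ = -1 := by
    rw [← hD, hPdef, aux_derivative_prod]
    apply Finset.sum_congr rfl
    intro θ _
    simp [hPedef]
  have hsum' : ∑ θ : F, derivative (Pe θ) = 0 := by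
    have h := congrArg derivative hsum
    rw [map_sum] at h
    simpa using h
  have hPe2 : ∀ θ : F, Pe θ = -1 - (X - C θ) * derivative (Pe θ) := by
    intro θ
    have h := congrArg derivative (hfac θ)
    rw [hD, derivative_mul] at h
    have hx : derivative (X - C θ : F[X]) = 1 := by simp
    rw [hx, one_mul] at h
    linear_combination -h
  have hsq : ∑ θ : F, (Pe θ) ^ 2 = 1 := by
    have key : ∀ θ : F, (Pe θ) ^ 2 = -Pe θ - P * derivative (Pe θ) := by
      intro θ
      calc (Pe θ) ^ 2 = (-1 - (X - C θ) * derivative (Pe θ)) * Pe θ := by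
            rw [← hPe2 θ]; ring
        _ = -Pe θ - ((X - C θ) * Pe θ) * derivative (Pe θ) := by ring
        _ = -Pe θ - P * derivative (Pe θ) := by rw [← hfac θ]
    rw [Finset.sum_congr rfl (fun θ _ => key θ)]
    rw [Finset.sum_sub_distrib, Finset.sum_neg_distrib, ← Finset.mul_sum, hsum, hsum']
    ring
  -- evaluation at Y = X^(q^n) in RatFunc F
  set Y : RatFunc F := RatFunc.X ^ q ^ n with hYdef
  set e : F → RatFunc F := fun θ => Polynomial.aeval Y (Pe θ) with hedef
  set d : RatFunc F := Y ^ q - Y with hddef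
  have hK1 : ∀ θ : F, d = (Y - RatFunc.C θ) * e θ := by
    intro θ
    have h := congrArg (Polynomial.aeval (R := F) Y) (hP ▸ hfac θ)
    simpa [RatFunc.algebraMap_eq_C] using h
  have hK2 : ∑ θ : F, e θ = -1 := by
    have h := congrArg (Polynomial.aeval (R := F) Y) hsum
    simpa using h
  have hK3 : ∑ θ : F, (e θ) ^ 2 = 1 := by
    have h := congrArg (Polynomial.aeval (R := F) Y) hsq
    simpa using h
  -- nonvanishing
  have hal : Function.Injective (algebraMap F[X] (RatFunc F)) :=
    IsFractionRing.injective _ _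
  have hX0 : ∀ θ : F, RatFunc.X - RatFunc.C θ ≠ 0 := by
    intro θ
    rw [show RatFunc.X - RatFunc.C θ = algebraMap F[X] (RatFunc F) (X - C θ) by
      rw [map_sub, RatFunc.algebraMap_X, RatFunc.algebraMap_C]]
    rw [map_ne_zero_iff _ hal]
    exact X_sub_C_ne_zero θ
  -- Frobenius
  have hfr : ∀ x y : RatFunc F, (x - y) ^ q ^ n = x ^ q ^ n - y ^ q ^ n := by
    intro x y
    rw [hq, ← pow_mul]
    exact sub_pow_char_pow x y (s * n)
  have hCfr : ∀ θ : F, (RatFunc.C θ) ^ q ^ n = RatFunc.C θ := by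
    intro θ
    rw [← map_pow]
    congr 1
    rw [← hF]
    exact FiniteField.pow_card_pow n θ
  have hYθ : ∀ θ : F, (RatFunc.X - RatFunc.C θ) ^ q ^ n = Y - RatFunc.C θ := by
    intro θ
    rw [hfr, hCfr, hYdef]
  have hdval : d = RatFunc.X ^ q ^ (n + 1) - RatFunc.X ^ q ^ n := by
    rw [hddef, hYdef, ← pow_mul, ← pow_succ]
  have hd0 : d ≠ 0 := by
    rw [hdval, show (RatFunc.X : RatFunc F) ^ q ^ (n+1) - RatFunc.X ^ q ^ n
        = algebraMap F[X] (RatFunc F) (X ^ q ^ (n+1) - X ^ q ^ n) by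
      rw [map_sub, map_pow, map_pow, RatFunc.algebraMap_X]]
    rw [map_ne_zero_iff _ hal, sub_ne_zero]
    intro h
    have := congrArg natDegree h
    rw [natDegree_X_pow, natDegree_X_pow] at this
    exact absurd this (Nat.ne_of_gt (Nat.pow_lt_pow_right hq1 (Nat.lt_succ_self n)))
  have hd20 : d ^ 2 ≠ 0 := pow_ne_zero 2 hd0
  have hqn1 : 1 ≤ q ^ n := Nat.one_le_pow n q (by omega)
  -- main term computation
  have hterm : ∀ θ : F, ((RatFunc.X - RatFunc.C θ) ^ (2 * q ^ n - 1))⁻¹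
      = (RatFunc.X - RatFunc.C θ) * (e θ) ^ 2 * (d ^ 2)⁻¹ := by
    intro θ
    have hx := hX0 θ
    have hpow : (RatFunc.X - RatFunc.C θ) ^ (2 * q ^ n - 1) * (RatFunc.X - RatFunc.C θ)
        = (Y - RatFunc.C θ) ^ 2 := by
      rw [← pow_succ, show 2 * q ^ n - 1 + 1 = q ^ n * 2 by omega, pow_mul, hYθ θ]
    have key : d ^ 2 = (RatFunc.X - RatFunc.C θ) * (e θ) ^ 2
        * (RatFunc.X - RatFunc.C θ) ^ (2 * q ^ n - 1) := by
      calc d ^ 2 = ((Y - RatFunc.C θ) * e θ) ^ 2 := by rw [← hK1 θ]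
        _ = (Y - RatFunc.C θ) ^ 2 * (e θ) ^ 2 := by ring
        _ = ((RatFunc.X - RatFunc.C θ) ^ (2 * q ^ n - 1) * (RatFunc.X - RatFunc.C θ))
              * (e θ) ^ 2 := by rw [hpow]
        _ = _ := by ring
    have hxk : (RatFunc.X - RatFunc.C θ) ^ (2 * q ^ n - 1) ≠ 0 := pow_ne_zero _ hx
    field_simp
    linear_combination key
  rw [Finset.sum_congr rfl (fun θ _ => hterm θ), ← Finset.sum_mul]
  have hsumx : ∑ θ : F, (RatFunc.X - RatFunc.C θ) * (e θ) ^ 2 = RatFunc.X - Y - d := by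
    have key : ∀ θ : F, (RatFunc.X - RatFunc.C θ) * (e θ) ^ 2
        = (RatFunc.X - Y) * (e θ) ^ 2 + d * e θ := by
      intro θ
      linear_combination (-(e θ)) * (hK1 θ)
    rw [Finset.sum_congr rfl (fun θ _ => key θ), Finset.sum_add_distrib,
      ← Finset.mul_sum, ← Finset.mul_sum, hK3, hK2]
    ring
  rw [hsumx]
  have hdpow : d = (RatFunc.X ^ q - RatFunc.X) ^ q ^ n := by
    rw [hfr, ← pow_mul, show q * q ^ n = q ^ (n + 1) from (pow_succ' q n).symm]
    exact hdval
  have hd2 : d ^ 2 = (RatFunc.X ^ q - RatFunc.X) ^ (2 * q ^ n) := by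
    rw [hdpow, ← pow_mul, mul_comm]
  rw [hd2, div_eq_mul_inv]
  congr 1
  rw [hdval, hYdef]
  ring
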